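/- Let I, J be adjacent facets of a subword complex with I∖{i} = J∖{j}. Then the root function of J satisfies r(J,k) = s_{r(I,i)}(r(I,k)) for min(i,j) < k ≤ max(i,j), and r(J,k) = r(I,k) otherwise, where s_β denotes the reflection in the root β. -/

import Mathlib

open scoped RealInnerProductSpace

variable {V : Type*} [NormedAddCommGroup V] [InnerProductSpace ℝ V] [FiniteDimensional ℝ V]

/-- The orthogonal reflection interchanging `v` and `-v` and fixing the hyperplane `v^⊥`
pointwise (reflection through the subspace `(ℝ∙v)ᗮ`). -/
noncomputable def reflAlong (v : V) : V ≃ₗᵢ[ℝ] V :=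
  Submodule.reflection (Submodule.span ℝ {v})ᗮ

/-- A finite (essential) reflection group on a Euclidean vector space, together with a
root system and a generic linear functional selecting the positive roots.  This is the
setting of a finite Coxeter system realized geometrically. -/
structure FiniteRootSystem (V : Type*) [NormedAddCommGroup V] [InnerProductSpace ℝ V]
    [FiniteDimensional ℝ V] where
  /-- The reflection group `W`, a subgroup of the orthogonal group. -/
  W : Subgroup (V ≃ₗᵢ[ℝ] V)
  /-- `W` is finite. -/
  finW : Finite W
  /-- The root system `Φ`. -/
  Φ : Set V
  ne_zero : ∀ β ∈ Φ, β ≠ 0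
  /-- `Φ` is stable under the action of `W`. -/
  stable : ∀ w ∈ W, ∀ β ∈ Φ, w β ∈ Φ
  /-- `Φ` contains two opposite roots orthogonal to each reflection hyperplane. -/
  neg_mem : ∀ β ∈ Φ, -β ∈ Φ
  smul_mem : ∀ β ∈ Φ, ∀ c : ℝ, c • β ∈ Φ → c = 1 ∨ c = -1
  refl_mem : ∀ β ∈ Φ, reflAlong β ∈ W
  refl_surj : ∀ g ∈ W, (∃ v : V, v ≠ 0 ∧ g = reflAlong v) → ∃ β ∈ Φ, g = reflAlong β
  /-- `W` is generated by the reflections along the roots. -/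
  gen : W = Subgroup.closure {g | ∃ β ∈ Φ, g = reflAlong β}
  /-- The intersection of the reflecting hyperplanes is reduced to `0`. -/
  essential : ∀ v : V, (∀ β ∈ Φ, ⟪β, v⟫ = 0) → v = 0
  /-- A linear functional not vanishing on any root, splitting `Φ` into positive and
  negative roots. -/
  f : V →ₗ[ℝ] ℝ
  f_ne : ∀ β ∈ Φ, f β ≠ 0

namespace FiniteRootSystem

variable (R : FiniteRootSystem V)

/-- The positive roots. -/
def PosRoots : Set V := {β ∈ R.Φ | 0 < R.f β}

/-- The negative roots. -/
def NegRoots : Set V := {β ∈ R.Φ | R.f β < 0}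

/-- The cone generated by the positive roots. -/
def InPosCone (v : V) : Prop :=
  ∃ (s : Finset V) (c : V → ℝ), ↑s ⊆ R.PosRoots ∧ (∀ x ∈ s, 0 ≤ c x) ∧
    v = ∑ x ∈ s, c x • x

/-- The simple roots: the roots lying on the extremal rays of the cone generated by the
positive roots. -/
def IsSimpleRoot (β : V) : Prop :=
  β ∈ R.PosRoots ∧
    ∀ x y : V, R.InPosCone x → R.InPosCone y → β = x + y → ∃ a : ℝ, 0 ≤ a ∧ x = a • β

/-- The inversion set `inv(w) = Φ⁺ ∩ w(Φ⁻)` of `w`: the positive roots sent to negative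
roots by `w⁻¹`. -/
def invSet (w : V ≃ₗᵢ[ℝ] V) : Set V :=
  {β ∈ R.PosRoots | w.symm β ∈ R.NegRoots}

/-- The length of `w`: the smallest number of simple reflections needed to write `w`. -/
noncomputable def len (w : V ≃ₗᵢ[ℝ] V) : ℕ :=
  sInf {n | ∃ L : List V, L.length = n ∧ (∀ β ∈ L, R.IsSimpleRoot β) ∧
    (L.map reflAlong).prod = w}

end FiniteRootSystem

section SubwordComplex

open FiniteRootSystem

variable {V : Type*} [NormedAddCommGroup V] [InnerProductSpace ℝ V] [FiniteDimensional ℝ V]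

/-- The product of the reflections of the letters of the word `Q` at the positions in `X`,
taken in increasing order of positions. -/
noncomputable def prodQ {m : ℕ} (Q : Fin m → V) (X : Finset (Fin m)) : V ≃ₗᵢ[ℝ] V :=
  ((X.sort (· ≤ ·)).map (fun k => reflAlong (Q k))).prod

/-- A facet of the subword complex `SC(Q, ρ)`: a set of positions whose complement forms
a reduced expression for `ρ` as a subword of `Q`.  Here the word `Q` is recorded by the
simple roots of its letters, the corresponding simple reflections being `reflAlong (Q k)`. -/
def IsSCFacet (R : FiniteRootSystem V) {m : ℕ} (Q : Fin m → V) (ρ : V ≃ₗᵢ[ℝ] V)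
    (I : Finset (Fin m)) : Prop :=
  prodQ Q Iᶜ = ρ ∧ Iᶜ.card = R.len ρ

/-- The root function of a facet `I`: `r(I, k) = Π Q_{[k−1]∖I} (α_{q_k})`. -/
noncomputable def rootf {m : ℕ} (Q : Fin m → V) (I : Finset (Fin m)) (k : Fin m) : V :=
  prodQ Q (Finset.univ.filter (fun x => x < k ∧ x ∉ I)) (Q k)

end SubwordComplex

section Helpers

variable {V : Type*} [NormedAddCommGroup V] [InnerProductSpace ℝ V] [FiniteDimensional ℝ V]

lemma orthogonal_map (g : V ≃ₗᵢ[ℝ] V) (K : Submodule ℝ V) :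
    (K.map (g.toLinearEquiv : V →ₗ[ℝ] V))ᗮ = Kᗮ.map (g.toLinearEquiv : V →ₗ[ℝ] V) := by
  ext x
  simp only [Submodule.mem_orthogonal, Submodule.mem_map, LinearEquiv.coe_coe,
    LinearIsometryEquiv.coe_toLinearEquiv]
  constructor
  · intro h
    refine ⟨g.symm x, fun u hu => ?_, by simp⟩
    have h2 := h (g u) ⟨u, hu, rfl⟩
    have h3 : (⟪g u, g (g.symm x)⟫ : ℝ) = ⟪u, g.symm x⟫ := g.inner_map_map u (g.symm x)
    rw [g.apply_symm_apply] at h3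
    rw [← h3]
    exact h2
  · rintro ⟨y, hy, rfl⟩ u ⟨w, hw, rfl⟩
    rw [g.inner_map_map]
    exact hy w hw

lemma reflection_congr {K L : Submodule ℝ V} (h : K = L) :
    (Submodule.reflection K : V ≃ₗᵢ[ℝ] V) = Submodule.reflection L := by subst h; rfl

lemma reflAlong_conj (g : V ≃ₗᵢ[ℝ] V) (v : V) :
    reflAlong (g v) = g * reflAlong v * g⁻¹ := by
  have h1 : (Submodule.span ℝ {g v}) = (Submodule.span ℝ {v}).map (g.toLinearEquiv : V →ₗ[ℝ] V) := by
    rw [Submodule.map_span]; simp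
  unfold reflAlong
  rw [reflection_congr (by rw [h1, orthogonal_map]), Submodule.reflection_map]
  rfl

lemma reflAlong_sq (v : V) : reflAlong v * reflAlong v = 1 := by
  ext x
  simp [reflAlong, LinearIsometryEquiv.coe_mul, Function.comp, Submodule.reflection_reflection]

lemma reflAlong_inv (v : V) : (reflAlong v)⁻¹ = reflAlong v :=
  inv_eq_of_mul_eq_one_right (reflAlong_sq v)

lemma sort_union {m : ℕ} {X Y : Finset (Fin m)} (h : ∀ x ∈ X, ∀ y ∈ Y, x < y) :
    (X ∪ Y).sort (· ≤ ·) = X.sort (· ≤ ·) ++ Y.sort (· ≤ ·) := by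
  have hd : Disjoint X Y := by
    rw [Finset.disjoint_left]
    intro a ha hay
    exact absurd (h a ha a hay) (lt_irrefl a)
  apply List.Perm.eq_of_pairwise' (Finset.pairwise_sort _ _) ?_ ?_
  · rw [List.pairwise_append]
    refine ⟨Finset.pairwise_sort _ _, Finset.pairwise_sort _ _, fun a ha b hb => ?_⟩
    exact le_of_lt (h a (by simpa using ha) b (by simpa using hb))
  · apply Multiset.coe_eq_coe.mp
    rw [← Finset.disjUnion_eq_union X Y hd, Finset.sort_eq]
    show X.1 + Y.1 = _
    rw [← Finset.sort_eq X (· ≤ ·), ← Finset.sort_eq Y (· ≤ ·)]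
    rfl

lemma prodQ_union {m : ℕ} (Q : Fin m → V) {X Y : Finset (Fin m)}
    (h : ∀ x ∈ X, ∀ y ∈ Y, x < y) :
    prodQ Q (X ∪ Y) = prodQ Q X * prodQ Q Y := by
  unfold prodQ
  rw [sort_union h, List.map_append, List.prod_append]

lemma prodQ_singleton {m : ℕ} (Q : Fin m → V) (i : Fin m) :
    prodQ Q {i} = reflAlong (Q i) := by
  unfold prodQ
  rw [Finset.sort_singleton]
  simp

lemma reflAlong_reflAlong (v x : V) : reflAlong v (reflAlong v x) = x :=
  Submodule.reflection_reflection _ _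

lemma facets_aux {m : ℕ} (Q : Fin m → V) (I J : Finset (Fin m))
    (hIJ : prodQ Q Iᶜ = prodQ Q Jᶜ)
    (i j : Fin m) (hi : i ∈ I) (hj : j ∈ J) (hij : I.erase i = J.erase j) (hlt : i < j) :
    (∀ k : Fin m,
      (i < k ∧ k ≤ j → rootf Q J k = reflAlong (rootf Q I i) (rootf Q I k)) ∧
      (¬(i < k ∧ k ≤ j) → rootf Q J k = rootf Q I k)) ∧
    reflAlong (rootf Q J j) = reflAlong (rootf Q I i) := by
  classical
  have hiJ : i ∉ J := by
    intro h
    have h2 : i ∈ I.erase i := by rw [hij]; exact Finset.mem_erase.mpr ⟨hlt.ne, h⟩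
    simp at h2
  have hjI : j ∉ I := by
    intro h
    have h2 : j ∈ J.erase j := by rw [← hij]; exact Finset.mem_erase.mpr ⟨hlt.ne', h⟩
    simp at h2
  have hmem : ∀ x : Fin m, x ≠ i → x ≠ j → (x ∈ J ↔ x ∈ I) := by
    intro x hxi hxj
    constructor
    · intro h
      have h2 : x ∈ J.erase j := Finset.mem_erase.mpr ⟨hxj, h⟩
      rw [← hij] at h2
      exact (Finset.mem_erase.mp h2).2
    · intro h
      have h2 : x ∈ I.erase i := Finset.mem_erase.mpr ⟨hxi, h⟩
      rw [hij] at h2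
      exact (Finset.mem_erase.mp h2).2
  -- abbreviations (as defs via pattern: we use explicit filters)
  set A : Finset (Fin m) := Finset.univ.filter (fun x => x < i ∧ x ∉ I) with hA
  set B : Finset (Fin m) := Finset.univ.filter (fun x => i < x ∧ x < j ∧ x ∉ I) with hB
  set E : Finset (Fin m) := Finset.univ.filter (fun x => j < x ∧ x ∉ I) with hE
  set a : V ≃ₗᵢ[ℝ] V := reflAlong (Q i) with ha
  set b : V ≃ₗᵢ[ℝ] V := reflAlong (Q j) with hb
  have memA : ∀ x : Fin m, x ∈ A ↔ x < i ∧ x ∉ I := by intro x; rw [hA]; simp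
  have memB : ∀ x : Fin m, x ∈ B ↔ i < x ∧ x < j ∧ x ∉ I := by intro x; rw [hB]; simp
  have memE : ∀ x : Fin m, x ∈ E ↔ j < x ∧ x ∉ I := by intro x; rw [hE]; simp
  -- decomposition of the complements
  have hIc : Iᶜ = A ∪ (B ∪ ({j} ∪ E)) := by
    ext x
    simp only [Finset.mem_compl, Finset.mem_union, Finset.mem_singleton, memA, memB, memE]
    constructor
    · intro hx
      rcases lt_trichotomy x i with h1 | h1 | h1
      · exact Or.inl ⟨h1, hx⟩
      · exact absurd hi (h1 ▸ hx)
      · rcases lt_trichotomy x j with h2 | h2 | h2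
        · exact Or.inr (Or.inl ⟨h1, h2, hx⟩)
        · exact Or.inr (Or.inr (Or.inl h2))
        · exact Or.inr (Or.inr (Or.inr ⟨h2, hx⟩))
    · rintro (⟨_, hx⟩ | ⟨_, _, hx⟩ | rfl | ⟨_, hx⟩) <;> first | exact hx | exact hjI
  have hJc : Jᶜ = A ∪ ({i} ∪ (B ∪ E)) := by
    ext x
    simp only [Finset.mem_compl, Finset.mem_union, Finset.mem_singleton, memA, memB, memE]
    constructor
    · intro hx
      rcases lt_trichotomy x i with h1 | h1 | h1
      · exact Or.inl ⟨h1, by rw [← hmem x h1.ne (h1.trans hlt).ne]; exact hx⟩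
      · exact Or.inr (Or.inl h1)
      · rcases lt_trichotomy x j with h2 | h2 | h2
        · exact Or.inr (Or.inr (Or.inl ⟨h1, h2, by rw [← hmem x h1.ne' h2.ne]; exact hx⟩))
        · exact absurd hj (h2 ▸ hx)
        · exact Or.inr (Or.inr (Or.inr ⟨h2, by rw [← hmem x (hlt.trans h2).ne' h2.ne']; exact hx⟩))
    · rintro (⟨h1, hx⟩ | rfl | ⟨h1, h2, hx⟩ | ⟨h1, hx⟩)
      · rw [hmem x h1.ne (h1.trans hlt).ne]; exact hx
      · exact hiJ
      · rw [hmem x h1.ne' h2.ne]; exact hx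
      · rw [hmem x (hlt.trans h1).ne' h1.ne']; exact hx
  -- products of the complements
  have pIc : prodQ Q Iᶜ = prodQ Q A * (prodQ Q B * (b * prodQ Q E)) := by
    rw [hIc, prodQ_union, prodQ_union, prodQ_union, prodQ_singleton, hb]
    · intro x hx y hy
      rw [Finset.mem_singleton] at hx
      rw [memE] at hy
      exact hx ▸ hy.1
    · intro x hx y hy
      rw [memB] at hx
      rw [Finset.mem_union, Finset.mem_singleton, memE] at hy
      rcases hy with rfl | hy
      · exact hx.2.1
      · exact hx.2.1.trans hy.1
    · intro x hx y hy
      rw [memA] at hx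
      rw [Finset.mem_union, Finset.mem_union, memB, Finset.mem_singleton, memE] at hy
      rcases hy with hy | rfl | hy
      · exact hx.1.trans hy.1
      · exact hx.1.trans hlt
      · exact hx.1.trans (hlt.trans hy.1)
  have pJc : prodQ Q Jᶜ = prodQ Q A * (a * (prodQ Q B * prodQ Q E)) := by
    rw [hJc, prodQ_union, prodQ_union, prodQ_union, prodQ_singleton, ha]
    · intro x hx y hy
      rw [memB] at hx
      rw [memE] at hy
      exact (hx.2.1).trans hy.1
    · intro x hx y hy
      rw [Finset.mem_singleton] at hx
      rw [Finset.mem_union, memB, memE] at hy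
      subst hx
      rcases hy with hy | hy
      · exact hy.1
      · exact hlt.trans hy.1
    · intro x hx y hy
      rw [memA] at hx
      rw [Finset.mem_union, Finset.mem_union, Finset.mem_singleton, memB, memE] at hy
      rcases hy with rfl | hy | hy
      · exact hx.1
      · exact hx.1.trans hy.1
      · exact hx.1.trans (hlt.trans hy.1)
  -- the key commutation identity
  have key : a * prodQ Q B = prodQ Q B * b := by
    have h := hIJ
    rw [pIc, pJc] at h
    have h2 := mul_left_cancel h
    have h3 : prodQ Q B * b * prodQ Q E = a * prodQ Q B * prodQ Q E := by
      rw [mul_assoc, mul_assoc]; exact h2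
    exact (mul_right_cancel h3).symm
  -- r(I,i) = prodQ Q A (Q i)
  have hrIi : reflAlong (rootf Q I i) = prodQ Q A * a * (prodQ Q A)⁻¹ := by
    rw [rootf, ← hA, reflAlong_conj, ha]
  have main1 : ∀ k : Fin m, i < k → k ≤ j →
      rootf Q J k = reflAlong (rootf Q I i) (rootf Q I k) := by
    intro k hik hkj
    set Bk : Finset (Fin m) := Finset.univ.filter (fun x => i < x ∧ x < k ∧ x ∉ I) with hBk
    have memBk : ∀ x : Fin m, x ∈ Bk ↔ i < x ∧ x < k ∧ x ∉ I := by intro x; rw [hBk]; simp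
    have hSI : Finset.univ.filter (fun x => x < k ∧ x ∉ I) = A ∪ Bk := by
      ext x
      simp only [Finset.mem_filter, Finset.mem_univ, true_and, Finset.mem_union, memA, memBk]
      constructor
      · rintro ⟨h1, hx⟩
        rcases lt_trichotomy x i with h2 | h2 | h2
        · exact Or.inl ⟨h2, hx⟩
        · exact absurd hi (h2 ▸ hx)
        · exact Or.inr ⟨h2, h1, hx⟩
      · rintro (⟨h1, hx⟩ | ⟨h1, h2, hx⟩)
        · exact ⟨h1.trans hik, hx⟩
        · exact ⟨h2, hx⟩
    have hSJ : Finset.univ.filter (fun x => x < k ∧ x ∉ J) = A ∪ ({i} ∪ Bk) := by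
      ext x
      simp only [Finset.mem_filter, Finset.mem_univ, true_and, Finset.mem_union,
        Finset.mem_singleton, memA, memBk]
      constructor
      · rintro ⟨h1, hx⟩
        rcases lt_trichotomy x i with h2 | h2 | h2
        · exact Or.inl ⟨h2, by rw [← hmem x h2.ne (h2.trans hlt).ne]; exact hx⟩
        · exact Or.inr (Or.inl h2)
        · refine Or.inr (Or.inr ⟨h2, h1, ?_⟩)
          rw [← hmem x h2.ne' (lt_of_lt_of_le h1 hkj).ne]; exact hx
      · rintro (⟨h1, hx⟩ | rfl | ⟨h1, h2, hx⟩)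
        · exact ⟨h1.trans hik, by rw [hmem x h1.ne (h1.trans hlt).ne]; exact hx⟩
        · exact ⟨hik, hiJ⟩
        · exact ⟨h2, by rw [hmem x h1.ne' (lt_of_lt_of_le h2 hkj).ne]; exact hx⟩
    have cA : ∀ x ∈ A, ∀ y ∈ ({i} ∪ Bk : Finset (Fin m)), x < y := by
      intro x hx y hy
      rw [memA] at hx
      rw [Finset.mem_union, Finset.mem_singleton, memBk] at hy
      rcases hy with rfl | hy
      · exact hx.1
      · exact hx.1.trans hy.1
    have ciBk : ∀ x ∈ ({i} : Finset (Fin m)), ∀ y ∈ Bk, x < y := by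
      intro x hx y hy
      rw [Finset.mem_singleton] at hx
      rw [memBk] at hy
      exact hx ▸ hy.1
    have cABk : ∀ x ∈ A, ∀ y ∈ Bk, x < y := by
      intro x hx y hy
      rw [memA] at hx
      rw [memBk] at hy
      exact hx.1.trans hy.1
    have grp : prodQ Q A * (a * prodQ Q Bk) =
        (prodQ Q A * a * (prodQ Q A)⁻¹) * (prodQ Q A * prodQ Q Bk) := by group
    calc rootf Q J k
        = (prodQ Q A * (a * prodQ Q Bk)) (Q k) := by
          rw [rootf, hSJ, prodQ_union Q cA, prodQ_union Q ciBk, prodQ_singleton, ha]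
      _ = ((prodQ Q A * a * (prodQ Q A)⁻¹) * (prodQ Q A * prodQ Q Bk)) (Q k) := by rw [grp]
      _ = (prodQ Q A * a * (prodQ Q A)⁻¹) ((prodQ Q A * prodQ Q Bk) (Q k)) := rfl
      _ = reflAlong (rootf Q I i) (rootf Q I k) := by
          rw [hrIi, rootf, hSI, prodQ_union Q cABk]
  have main2 : ∀ k : Fin m, ¬(i < k ∧ k ≤ j) → rootf Q J k = rootf Q I k := by
    intro k hknot
    rcases le_or_gt k i with hk | hk1
    · -- k ≤ i
      have hS : Finset.univ.filter (fun x => x < k ∧ x ∉ J) =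
          Finset.univ.filter (fun x => x < k ∧ x ∉ I) := by
        ext x
        simp only [Finset.mem_filter, Finset.mem_univ, true_and]
        constructor
        · rintro ⟨h1, hx⟩
          refine ⟨h1, ?_⟩
          rw [← hmem x (h1.trans_le hk).ne ((h1.trans_le hk).trans hlt).ne]; exact hx
        · rintro ⟨h1, hx⟩
          refine ⟨h1, ?_⟩
          rw [hmem x (h1.trans_le hk).ne ((h1.trans_le hk).trans hlt).ne]; exact hx
      rw [rootf, rootf, hS]
    · -- j < k
      have hk : j < k := lt_of_not_ge (fun h => hknot ⟨hk1, h⟩)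
      set Ek : Finset (Fin m) := Finset.univ.filter (fun x => j < x ∧ x < k ∧ x ∉ I) with hEk
      have memEk : ∀ x : Fin m, x ∈ Ek ↔ j < x ∧ x < k ∧ x ∉ I := by intro x; rw [hEk]; simp
      have hSI : Finset.univ.filter (fun x => x < k ∧ x ∉ I) = A ∪ (B ∪ ({j} ∪ Ek)) := by
        ext x
        simp only [Finset.mem_filter, Finset.mem_univ, true_and, Finset.mem_union,
          Finset.mem_singleton, memA, memB, memEk]
        constructor
        · rintro ⟨h1, hx⟩
          rcases lt_trichotomy x i with h2 | h2 | h2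
          · exact Or.inl ⟨h2, hx⟩
          · exact absurd hi (h2 ▸ hx)
          · rcases lt_trichotomy x j with h3 | h3 | h3
            · exact Or.inr (Or.inl ⟨h2, h3, hx⟩)
            · exact Or.inr (Or.inr (Or.inl h3))
            · exact Or.inr (Or.inr (Or.inr ⟨h3, h1, hx⟩))
        · rintro (⟨h1, hx⟩ | ⟨h1, h2, hx⟩ | rfl | ⟨h1, h2, hx⟩)
          · exact ⟨h1.trans (hlt.trans hk), hx⟩
          · exact ⟨h2.trans hk, hx⟩
          · exact ⟨hk, hjI⟩
          · exact ⟨h2, hx⟩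
      have hSJ : Finset.univ.filter (fun x => x < k ∧ x ∉ J) = A ∪ ({i} ∪ (B ∪ Ek)) := by
        ext x
        simp only [Finset.mem_filter, Finset.mem_univ, true_and, Finset.mem_union,
          Finset.mem_singleton, memA, memB, memEk]
        constructor
        · rintro ⟨h1, hx⟩
          rcases lt_trichotomy x i with h2 | h2 | h2
          · exact Or.inl ⟨h2, by rw [← hmem x h2.ne (h2.trans hlt).ne]; exact hx⟩
          · exact Or.inr (Or.inl h2)
          · rcases lt_trichotomy x j with h3 | h3 | h3
            · exact Or.inr (Or.inr (Or.inl ⟨h2, h3, by rw [← hmem x h2.ne' h3.ne]; exact hx⟩))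
            · exact absurd hj (h3 ▸ hx)
            · refine Or.inr (Or.inr (Or.inr ⟨h3, h1, ?_⟩))
              rw [← hmem x (hlt.trans h3).ne' h3.ne']; exact hx
        · rintro (⟨h1, hx⟩ | rfl | ⟨h1, h2, hx⟩ | ⟨h1, h2, hx⟩)
          · exact ⟨h1.trans (hlt.trans hk), by rw [hmem x h1.ne (h1.trans hlt).ne]; exact hx⟩
          · exact ⟨hlt.trans hk, hiJ⟩
          · exact ⟨h2.trans hk, by rw [hmem x h1.ne' h2.ne]; exact hx⟩
          · exact ⟨h2, by rw [hmem x (hlt.trans h1).ne' h1.ne']; exact hx⟩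
      have cI1 : ∀ x ∈ ({j} : Finset (Fin m)), ∀ y ∈ Ek, x < y := by
        intro x hx y hy
        rw [Finset.mem_singleton] at hx
        rw [memEk] at hy
        exact hx ▸ hy.1
      have cI2 : ∀ x ∈ B, ∀ y ∈ ({j} ∪ Ek : Finset (Fin m)), x < y := by
        intro x hx y hy
        rw [memB] at hx
        rw [Finset.mem_union, Finset.mem_singleton, memEk] at hy
        rcases hy with rfl | hy
        · exact hx.2.1
        · exact hx.2.1.trans hy.1
      have cI3 : ∀ x ∈ A, ∀ y ∈ (B ∪ ({j} ∪ Ek) : Finset (Fin m)), x < y := by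
        intro x hx y hy
        rw [memA] at hx
        rw [Finset.mem_union, Finset.mem_union, memB, Finset.mem_singleton, memEk] at hy
        rcases hy with hy | rfl | hy
        · exact hx.1.trans hy.1
        · exact hx.1.trans hlt
        · exact hx.1.trans (hlt.trans hy.1)
      have cJ1 : ∀ x ∈ B, ∀ y ∈ Ek, x < y := by
        intro x hx y hy
        rw [memB] at hx
        rw [memEk] at hy
        exact hx.2.1.trans hy.1
      have cJ2 : ∀ x ∈ ({i} : Finset (Fin m)), ∀ y ∈ (B ∪ Ek : Finset (Fin m)), x < y := by
        intro x hx y hy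
        rw [Finset.mem_singleton] at hx
        rw [Finset.mem_union, memB, memEk] at hy
        subst hx
        rcases hy with hy | hy
        · exact hy.1
        · exact hlt.trans hy.1
      have cJ3 : ∀ x ∈ A, ∀ y ∈ ({i} ∪ (B ∪ Ek) : Finset (Fin m)), x < y := by
        intro x hx y hy
        rw [memA] at hx
        rw [Finset.mem_union, Finset.mem_union, Finset.mem_singleton, memB, memEk] at hy
        rcases hy with rfl | hy | hy
        · exact hx.1
        · exact hx.1.trans hy.1
        · exact hx.1.trans (hlt.trans hy.1)
      have grp : prodQ Q A * (a * (prodQ Q B * prodQ Q Ek)) =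
          prodQ Q A * (prodQ Q B * (b * prodQ Q Ek)) := by
        rw [← mul_assoc a, key, mul_assoc]
      rw [rootf, rootf, hSI, hSJ, prodQ_union Q cJ3, prodQ_union Q cJ2, prodQ_union Q cJ1,
        prodQ_union Q cI3, prodQ_union Q cI2, prodQ_union Q cI1, prodQ_singleton, prodQ_singleton,
        ← ha, ← hb, grp]
  refine ⟨fun k => ⟨fun h => main1 k h.1 h.2, main2 k⟩, ?_⟩
  -- the extra statement
  have hrJj : rootf Q J j = (prodQ Q A * (a * prodQ Q B)) (Q j) := by
    have h := main1 j hlt le_rfl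
    rw [rootf] at h ⊢
    have hSJ : Finset.univ.filter (fun x => x < j ∧ x ∉ J) = A ∪ ({i} ∪ B) := by
      ext x
      simp only [Finset.mem_filter, Finset.mem_univ, true_and, Finset.mem_union,
        Finset.mem_singleton, memA, memB]
      constructor
      · rintro ⟨h1, hx⟩
        rcases lt_trichotomy x i with h2 | h2 | h2
        · exact Or.inl ⟨h2, by rw [← hmem x h2.ne (h2.trans hlt).ne]; exact hx⟩
        · exact Or.inr (Or.inl h2)
        · exact Or.inr (Or.inr ⟨h2, h1, by rw [← hmem x h2.ne' h1.ne]; exact hx⟩)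
      · rintro (⟨h1, hx⟩ | rfl | ⟨h1, h2, hx⟩)
        · exact ⟨h1.trans hlt, by rw [hmem x h1.ne (h1.trans hlt).ne]; exact hx⟩
        · exact ⟨hlt, hiJ⟩
        · exact ⟨h2, by rw [hmem x h1.ne' h2.ne]; exact hx⟩
    have cA : ∀ x ∈ A, ∀ y ∈ ({i} ∪ B : Finset (Fin m)), x < y := by
      intro x hx y hy
      rw [memA] at hx
      rw [Finset.mem_union, Finset.mem_singleton, memB] at hy
      rcases hy with rfl | hy
      · exact hx.1
      · exact hx.1.trans hy.1
    have ciB : ∀ x ∈ ({i} : Finset (Fin m)), ∀ y ∈ B, x < y := by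
      intro x hx y hy
      rw [Finset.mem_singleton] at hx
      rw [memB] at hy
      exact hx ▸ hy.1
    rw [hSJ, prodQ_union Q cA, prodQ_union Q ciB, prodQ_singleton, ha]
  rw [hrJj, reflAlong_conj, hrIi, ← hb]
  have hb2 : b * b = 1 := by rw [hb]; exact reflAlong_sq _
  rw [key]
  have e1 : prodQ Q A * (prodQ Q B * b) * b = prodQ Q A * prodQ Q B := by
    rw [mul_assoc (prodQ Q A), mul_assoc (prodQ Q B), hb2, mul_one]
  rw [e1, ← key]
  rw [mul_inv_rev, mul_inv_rev, ha, reflAlong_inv, ← ha]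
  group

end Helpers

open FiniteRootSystem in
/-- Updating the root function along a flip: if `I∖{i} = J∖{j}` are adjacent facets, then
`r(J,k) = s_{r(I,i)}(r(I,k))` for `min(i,j) < k ≤ max(i,j)`, and `r(J,k) = r(I,k)`
otherwise. -/
theorem rootf_update
    {V : Type*} [NormedAddCommGroup V] [InnerProductSpace ℝ V] [FiniteDimensional ℝ V]
    (R : FiniteRootSystem V) {m : ℕ} (Q : Fin m → V) (hQ : ∀ k, R.IsSimpleRoot (Q k))
    (ρ : V ≃ₗᵢ[ℝ] V) (hρ : ρ ∈ R.W)
    (I J : Finset (Fin m)) (hI : IsSCFacet R Q ρ I) (hJ : IsSCFacet R Q ρ J)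
    (i j : Fin m) (hi : i ∈ I) (hj : j ∈ J) (hij : I.erase i = J.erase j) (hne : I ≠ J) :
    ∀ k : Fin m,
      (min i j < k ∧ k ≤ max i j → rootf Q J k = reflAlong (rootf Q I i) (rootf Q I k)) ∧
      (¬(min i j < k ∧ k ≤ max i j) → rootf Q J k = rootf Q I k) := by
  have hij' : i ≠ j := by
    rintro rfl
    exact hne (by rw [← Finset.insert_erase hi, hij, Finset.insert_erase hj])
  rcases hij'.lt_or_gt with hlt | hlt
  · have H := facets_aux Q I J (hI.1.trans hJ.1.symm) i j hi hj hij hlt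
    intro k
    rw [min_eq_left hlt.le, max_eq_right hlt.le]
    exact H.1 k
  · have H := facets_aux Q J I (hJ.1.trans hI.1.symm) j i hj hi hij.symm hlt
    intro k
    rw [min_eq_right hlt.le, max_eq_left hlt.le]
    refine ⟨fun h => ?_, fun h => ((H.1 k).2 h).symm⟩
    have e := (H.1 k).1 h
    rw [← H.2] at e
    have e2 := congrArg (reflAlong (rootf Q I i)) e
    rw [reflAlong_reflAlong] at e2
    exact e2.symm
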